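/- Let H > 0 and ε ≥ 0. Consider a single-item auction with two agents where only agent 1 has a signal s₁ ∈ {0,1}, with values v₁(0) = 1, v₁(1) = 1+ε, v₂(0) = 0, v₂(1) = H. Let x₁, x₂ : {0,1} → ℝ be allocation probabilities with 0 ≤ x₁(b), 0 ≤ x₂(b), x₁(b) + x₂(b) ≤ 1 for b ∈ {0,1}, and with x₁ monotone: x₁(0) ≤ x₁(1). Then min( x₁(0)·1 / 1 , (x₁(1)·(1+ε) + x₂(1)·H) / H ) ≤ 1/2 + (1+ε)/H. Consequently, as H → ∞, no ex-post IC-IR mechanism for this SOS instance achieves a better welfare approximation factor than 2. -/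
import Mathlib


/-- Theorem 4.2(a) (thm:noexpost): in the single-item instance with two agents
where only agent 1 has a binary signal (`false` ↦ 0, `true` ↦ 1), values
`v₁(0) = 1`, `v₁(1) = 1 + ε`, `v₂(0) = 0`, `v₂(1) = H`, any feasible allocation
rule `(x₁, x₂)` that is monotone in agent 1's signal has its worst-case welfare
approximation factor (over the two signal profiles) bounded by
`1/2 + (1+ε)/H`.  Hence, as `H → ∞`, no ex-post IC-IR mechanism beats a
2-approximation even for SOS valuations. -/
theorem no_expost_better_than_two (H ε : ℝ) (hH : 0 < H) (hε : 0 ≤ ε)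
    (x₁ x₂ : Bool → ℝ)
    (hx₁ : ∀ b, 0 ≤ x₁ b) (hx₂ : ∀ b, 0 ≤ x₂ b)
    (hfeas : ∀ b, x₁ b + x₂ b ≤ 1)
    (hmono : x₁ false ≤ x₁ true) :
    min (x₁ false * 1 / 1) ((x₁ true * (1 + ε) + x₂ true * H) / H)
      ≤ 1 / 2 + (1 + ε) / H := by
  rcases le_or_gt (x₁ false) (1/2) with h | h
  · have : (1 + ε) / H ≥ 0 := by positivity
    calc min (x₁ false * 1 / 1) ((x₁ true * (1 + ε) + x₂ true * H) / H)
        ≤ x₁ false * 1 / 1 := min_le_left _ _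
      _ ≤ 1/2 := by simpa using h
      _ ≤ 1 / 2 + (1 + ε) / H := by linarith
  · have h1 : x₂ true ≤ 1/2 := by linarith [hfeas true, hmono]
    have h2 : x₁ true ≤ 1 := by linarith [hfeas true, hx₂ true]
    have key : (x₁ true * (1 + ε) + x₂ true * H) / H ≤ 1 / 2 + (1 + ε) / H := by
      rw [div_le_iff₀ hH, add_mul, div_mul_cancel₀ _ hH.ne']
      nlinarith [hx₁ true]
    exact le_trans (min_le_right _ _) key
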